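/- Each sort of the sorted target calculus is closed under βη-reduction: if P is a term of sort T (respectively Q, W, or K) and P →_{βη} P', then P' is again a term of the same sort. -/
import Mathlib


/-- Untyped λ-terms with two categories of variables (ordinary `ovar` and
continuation `kvar`) and two corresponding binders. -/
inductive L : Type
  | ovar : ℕ → L
  | kvar : ℕ → L
  | lamO : ℕ → L → L
  | lamK : ℕ → L → L
  | app : L → L → L
  deriving DecidableEq

/-- Free ordinary variables. -/
def fvO : L → Finset ℕ
  | .ovar x => {x}
  | .kvar _ => ∅
  | .lamO x P => fvO P \ {x}
  | .lamK _ P => fvO P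
  | .app P Q => fvO P ∪ fvO Q

/-- Free continuation variables. -/
def fvK : L → Finset ℕ
  | .ovar _ => ∅
  | .kvar k => {k}
  | .lamO _ P => fvK P
  | .lamK k P => fvK P \ {k}
  | .app P Q => fvK P ∪ fvK Q

/-- Substitution for an ordinary variable. -/
def osub (x : ℕ) (A : L) : L → L
  | .ovar y => if y = x then A else .ovar y
  | .kvar k => .kvar k
  | .lamO y P => if y = x then .lamO y P else .lamO y (osub x A P)
  | .lamK k P => .lamK k (osub x A P)
  | .app P Q => .app (osub x A P) (osub x A Q)

/-- Substitution for a continuation variable. -/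
def ksub (k : ℕ) (A : L) : L → L
  | .ovar y => .ovar y
  | .kvar l => if l = k then A else .kvar l
  | .lamO y P => .lamO y (ksub k A P)
  | .lamK l P => if l = k then .lamK l P else .lamK l (ksub k A P)
  | .app P Q => .app (ksub k A P) (ksub k A Q)

/-- One βη-reduction step (binder type matching the argument category),
applied in any context. -/
inductive Step : L → L → Prop
  | betaO (x : ℕ) (P A : L) : Step (.app (.lamO x P) A) (osub x A P)
  | betaK (k : ℕ) (P A : L) : Step (.app (.lamK k P) A) (ksub k A P)
  | etaO (x : ℕ) (P : L) (h : x ∉ fvO P) : Step (.lamO x (.app P (.ovar x))) P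
  | etaK (k : ℕ) (P : L) (h : k ∉ fvK P) : Step (.lamK k (.app P (.kvar k))) P
  | lamO : Step P P' → Step (.lamO x P) (.lamO x P')
  | lamK : Step P P' → Step (.lamK k P) (.lamK k P')
  | appL : Step P P' → Step (.app P Q) (.app P' Q)
  | appR : Step Q Q' → Step (.app P Q) (.app P Q')

mutual
/-- Sorting judgment: terms of sort T ::= λk.Q | WW. -/
inductive SortT : L → Prop
  | lamK : SortQ Q → SortT (.lamK k Q)
  | app : SortW W → SortW W' → SortT (.app W W')
/-- Terms of sort Q ::= KW | TK. -/
inductive SortQ : L → Prop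
  | kw : SortK K → SortW W → SortQ (.app K W)
  | tk : SortT T → SortK K → SortQ (.app T K)
/-- Terms of sort W ::= x | λx.T. -/
inductive SortW : L → Prop
  | var : SortW (.ovar x)
  | lam : SortT T → SortW (.lamO x T)
/-- Terms of sort K ::= k | λx.Q. -/
inductive SortK : L → Prop
  | kvar : SortK (.kvar k)
  | lamQ : SortQ Q → SortK (.lamO x Q)
end

lemma osub_pres (x : ℕ) (A : L) (hA : SortW A) :
    ∀ P, (SortT P → SortT (osub x A P)) ∧ (SortQ P → SortQ (osub x A P)) ∧
         (SortW P → SortW (osub x A P)) ∧ (SortK P → SortK (osub x A P)) := by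
  intro P
  induction P with
  | ovar y =>
    refine ⟨?_, ?_, ?_, ?_⟩ <;> intro hs <;> cases hs
    simp only [osub]; split <;> [exact hA; exact SortW.var]
  | kvar l =>
    refine ⟨?_, ?_, ?_, ?_⟩ <;> intro hs <;> cases hs
    exact SortK.kvar
  | lamO y P ih =>
    refine ⟨?_, ?_, ?_, ?_⟩ <;> intro hs <;> cases hs <;>
      simp only [osub] <;> split
    case _ hT _ => exact SortW.lam hT
    case _ hT _ => exact SortW.lam (ih.1 hT)
    case _ hQ _ => exact SortK.lamQ hQ
    case _ hQ _ => exact SortK.lamQ (ih.2.1 hQ)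
  | lamK l P ih =>
    refine ⟨?_, ?_, ?_, ?_⟩ <;> intro hs <;> cases hs
    case _ hQ => exact SortT.lamK (ih.2.1 hQ)
  | app P Q ihP ihQ =>
    refine ⟨?_, ?_, ?_, ?_⟩ <;> intro hs <;> cases hs
    case _ h1 h2 => exact SortT.app (ihP.2.2.1 h1) (ihQ.2.2.1 h2)
    case _ h1 h2 => exact SortQ.kw (ihP.2.2.2 h1) (ihQ.2.2.1 h2)
    case _ h1 h2 => exact SortQ.tk (ihP.1 h1) (ihQ.2.2.2 h2)

lemma ksub_pres (k : ℕ) (A : L) (hA : SortK A) :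
    ∀ P, (SortT P → SortT (ksub k A P)) ∧ (SortQ P → SortQ (ksub k A P)) ∧
         (SortW P → SortW (ksub k A P)) ∧ (SortK P → SortK (ksub k A P)) := by
  intro P
  induction P with
  | ovar y =>
    refine ⟨?_, ?_, ?_, ?_⟩ <;> intro hs <;> cases hs
    exact SortW.var
  | kvar l =>
    refine ⟨?_, ?_, ?_, ?_⟩ <;> intro hs <;> cases hs
    simp only [ksub]; split <;> [exact hA; exact SortK.kvar]
  | lamO y P ih =>
    refine ⟨?_, ?_, ?_, ?_⟩ <;> intro hs <;> cases hs
    case _ hT => exact SortW.lam (ih.1 hT)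
    case _ hQ => exact SortK.lamQ (ih.2.1 hQ)
  | lamK l P ih =>
    refine ⟨?_, ?_, ?_, ?_⟩ <;> intro hs <;> cases hs
    case _ hQ =>
      simp only [ksub]; split
      · exact SortT.lamK hQ
      · exact SortT.lamK (ih.2.1 hQ)
  | app P Q ihP ihQ =>
    refine ⟨?_, ?_, ?_, ?_⟩ <;> intro hs <;> cases hs
    case _ h1 h2 => exact SortT.app (ihP.2.2.1 h1) (ihQ.2.2.1 h2)
    case _ h1 h2 => exact SortQ.kw (ihP.2.2.2 h1) (ihQ.2.2.1 h2)
    case _ h1 h2 => exact SortQ.tk (ihP.1 h1) (ihQ.2.2.2 h2)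

lemma step_pres : ∀ P P' : L, Step P P' →
    (SortT P → SortT P') ∧ (SortQ P → SortQ P') ∧
    (SortW P → SortW P') ∧ (SortK P → SortK P') := by
  intro P P' h
  induction h with
  | betaO x P A =>
    refine ⟨?_, ?_, ?_, ?_⟩ <;> intro hs <;> cases hs
    case _ h1 h2 =>
      cases h1 with
      | lam hT => exact (osub_pres x A h2 P).1 hT
    case _ h1 h2 =>
      cases h1 with
      | lamQ hQ => exact (osub_pres x A h2 P).2.1 hQ
    case _ h1 h2 => cases h1
  | betaK k P A =>
    refine ⟨?_, ?_, ?_, ?_⟩ <;> intro hs <;> cases hs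
    case _ h1 h2 => cases h1
    case _ h1 h2 => cases h1
    case _ h1 h2 =>
      cases h1 with
      | lamK hQ => exact (ksub_pres k A h2 P).2.1 hQ
  | etaO x P hx =>
    refine ⟨?_, ?_, ?_, ?_⟩ <;> intro hs <;> cases hs
    case _ hT =>
      cases hT with
      | app h1 h2 => exact h1
    case _ hQ =>
      cases hQ with
      | kw h1 h2 => exact h1
      | tk h1 h2 => cases h2
  | etaK k P hk =>
    refine ⟨?_, ?_, ?_, ?_⟩ <;> intro hs <;> cases hs
    case _ hQ =>
      cases hQ with
      | kw h1 h2 => cases h2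
      | tk h1 h2 => exact h1
  | lamO h ih =>
    refine ⟨?_, ?_, ?_, ?_⟩ <;> intro hs <;> cases hs
    case _ hT => exact SortW.lam (ih.1 hT)
    case _ hQ => exact SortK.lamQ (ih.2.1 hQ)
  | lamK h ih =>
    refine ⟨?_, ?_, ?_, ?_⟩ <;> intro hs <;> cases hs
    case _ hQ => exact SortT.lamK (ih.2.1 hQ)
  | appL h ih =>
    refine ⟨?_, ?_, ?_, ?_⟩ <;> intro hs <;> cases hs
    case _ h1 h2 => exact SortT.app (ih.2.2.1 h1) h2
    case _ h1 h2 => exact SortQ.kw (ih.2.2.2 h1) h2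
    case _ h1 h2 => exact SortQ.tk (ih.1 h1) h2
  | appR h ih =>
    refine ⟨?_, ?_, ?_, ?_⟩ <;> intro hs <;> cases hs
    case _ h1 h2 => exact SortT.app h1 (ih.2.2.1 h2)
    case _ h1 h2 => exact SortQ.kw h1 (ih.2.2.1 h2)
    case _ h1 h2 => exact SortQ.tk h1 (ih.2.2.2 h2)

/-- Each sort of the sorted target calculus is closed under
βη-reduction. -/
theorem sorts_closed_under_betaEta :
    (∀ P P' : L, SortT P → Step P P' → SortT P') ∧
    (∀ P P' : L, SortQ P → Step P P' → SortQ P') ∧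
    (∀ P P' : L, SortW P → Step P P' → SortW P') ∧
    (∀ P P' : L, SortK P → Step P P' → SortK P') := by
  exact ⟨fun P P' h s => (step_pres P P' s).1 h,
         fun P P' h s => (step_pres P P' s).2.1 h,
         fun P P' h s => (step_pres P P' s).2.2.1 h,
         fun P P' h s => (step_pres P P' s).2.2.2 h⟩
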